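/- Suppose Upd satisfies P2 and P3, and Upd(Pr,B) = ∅ for some measure space M, probability measure Pr, and event B with Pr(B) = α < 1. Then for every measure space M', probability measure Pr', and event B' with Pr'(B') < α, we have Upd(Pr',B') = ∅. -/

import Mathlib

open MeasureTheory ProbabilityTheory Set
open scoped Classical NNReal ENNReal

noncomputable section

/-- A family of update functions, one for each measure space. -/
abbrev UpdFamily : Type 1 :=
  ∀ (W : Type) [MeasurableSpace W],
    Set (ProbabilityMeasure W) → Set W → Set (ProbabilityMeasure W)

/-- Base condition: `Upd(X,B) = ∅` whenever every measure in `X` gives `B` probability 0. -/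
def UpdBase (U : UpdFamily) : Prop :=
  ∀ (W : Type) [MeasurableSpace W] (X : Set (ProbabilityMeasure W)) (B : Set W),
    (∀ μ ∈ X, μ B = 0) → U W X B = ∅

/-- The conditional probability `Pr(A|B) = Pr(A ∩ B)/Pr(B)`. -/
def condProb {W : Type} [MeasurableSpace W] (μ : ProbabilityMeasure W) (A B : Set W) : ℝ≥0 :=
  μ (A ∩ B) / μ B

/-- The conditional probability measure `Pr(·|B)` (defined when `Pr(B) > 0`). -/
def condPM {W : Type} [MeasurableSpace W] (μ : ProbabilityMeasure W) (B : Set W) :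
    ProbabilityMeasure W :=
  if h : (μ : Measure W) B ≠ 0 then
    ⟨(μ : Measure W)[|B], cond_isProbabilityMeasure h⟩
  else μ

/-- Pushforward of a probability measure along a measurable map (`f*`). -/
def pushPM {W W' : Type} [MeasurableSpace W] [MeasurableSpace W']
    {f : W → W'} (hf : Measurable f) (μ : ProbabilityMeasure W) : ProbabilityMeasure W' :=
  μ.map hf.aemeasurable

/-- P1: every measure in `Upd(X,B)` assigns probability 1 to `B`. -/
def P1 (U : UpdFamily) : Prop :=
  ∀ (W : Type) [MeasurableSpace W] (X : Set (ProbabilityMeasure W)) (B : Set W),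
    MeasurableSet B → ∀ μ ∈ U W X B, μ B = 1

/-- P2: representation independence under measurable surjections. -/
def P2 (U : UpdFamily) : Prop :=
  ∀ (W W' : Type) [MeasurableSpace W] [MeasurableSpace W'] (f : W → W')
    (hf : Measurable f), Function.Surjective f →
    ∀ (X : Set (ProbabilityMeasure W)) (B : Set W'), MeasurableSet B →
      U W' (pushPM hf '' X) B = pushPM hf '' (U W X (f ⁻¹' B))

/-- P3: compositionality of updating. -/
def P3 (U : UpdFamily) : Prop :=
  ∀ (W : Type) [MeasurableSpace W] (X : Set (ProbabilityMeasure W)) (B C : Set W),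
    MeasurableSet B → MeasurableSet C → U W (U W X B) C = U W X (B ∩ C)

/-- P4: trivial update on sure evidence. -/
def P4 (U : UpdFamily) : Prop :=
  ∀ (W : Type) [MeasurableSpace W] (X : Set (ProbabilityMeasure W)) (B : Set W),
    MeasurableSet B → (∀ μ ∈ X, μ B = 1) → U W X B = X

/-- P5: pointwise union decomposition. -/
def P5 (U : UpdFamily) : Prop :=
  ∀ (W : Type) [MeasurableSpace W] (X : Set (ProbabilityMeasure W)) (B : Set W),
    MeasurableSet B → U W X B = ⋃ μ ∈ X, U W {μ} B

/-- P6': singleton inputs yield at most one output measure. -/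
def P6' (U : UpdFamily) : Prop :=
  ∀ (W : Type) [MeasurableSpace W] (μ : ProbabilityMeasure W) (B : Set W),
    MeasurableSet B → (U W {μ} B).Subsingleton

/-- P6'': bounded amplification relative to conditioning. -/
def P6'' (U : UpdFamily) : Prop :=
  ∀ (W : Type) [MeasurableSpace W] (μ : ProbabilityMeasure W), ∃ c : ℝ≥0,
    ∀ (A B : Set W), MeasurableSet A → MeasurableSet B →
      ∀ ν ∈ U W {μ} B, ν A ≤ c * condProb μ A B

/-- P6: either P6' or P6'' holds. -/
def P6 (U : UpdFamily) : Prop := P6' U ∨ P6'' U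

/-- P7: some non-sure evidence yields a nonempty update. -/
def P7 (U : UpdFamily) : Prop :=
  ∃ (W : Type) (_ : MeasurableSpace W) (X : Set (ProbabilityMeasure W)) (B : Set W),
    MeasurableSet B ∧ (∀ μ ∈ X, μ B ≠ 1) ∧ U W X B ≠ ∅

/-- Conditioning: `Upd_cond(X,B) = {Pr(·|B) : Pr ∈ X, Pr(B) > 0}`. -/
def updCond {W : Type} [MeasurableSpace W] (X : Set (ProbabilityMeasure W)) (B : Set W) :
    Set (ProbabilityMeasure W) :=
  {ν | ∃ μ ∈ X, 0 < μ B ∧ ν = condPM μ B}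

/-- Constraining: `Upd_constrain(X,B) = {Pr ∈ X : Pr(B) = 1}`. -/
def updConstrain {W : Type} [MeasurableSpace W] (X : Set (ProbabilityMeasure W)) (B : Set W) :
    Set (ProbabilityMeasure W) := {μ ∈ X | μ B = 1}

end


section Stmt8Aux

open MeasureTheory

noncomputable section

/-- Pushforward value on measurable sets. -/
lemma pushPM_apply {W W' : Type} [MeasurableSpace W] [MeasurableSpace W'] {f : W → W'}
    (hf : Measurable f) (μ : ProbabilityMeasure W) {S : Set W'} (hS : MeasurableSet S) :
    (pushPM hf μ).toMeasure S = μ.toMeasure (f ⁻¹' S) :=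
  ProbabilityMeasure.map_apply' μ hf.aemeasurable hS

lemma empty_down (U : UpdFamily) (h2 : P2 U) {W W' : Type} [MeasurableSpace W]
    [MeasurableSpace W'] {f : W → W'} (hf : Measurable f) (hsurj : Function.Surjective f)
    (μ : ProbabilityMeasure W) {S : Set W'} (hS : MeasurableSet S)
    (h : U W {μ} (f ⁻¹' S) = ∅) : U W' {pushPM hf μ} S = ∅ := by
  have hh := h2 W W' f hf hsurj {μ} S hS
  rw [Set.image_singleton] at hh
  rw [hh, h, Set.image_empty]

lemma empty_up (U : UpdFamily) (h2 : P2 U) {W W' : Type} [MeasurableSpace W]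
    [MeasurableSpace W'] {f : W → W'} (hf : Measurable f) (hsurj : Function.Surjective f)
    (μ : ProbabilityMeasure W) {S : Set W'} (hS : MeasurableSet S)
    (h : U W' {pushPM hf μ} S = ∅) : U W {μ} (f ⁻¹' S) = ∅ := by
  have hh := h2 W W' f hf hsurj {μ} S hS
  rw [Set.image_singleton, h] at hh
  exact Set.image_eq_empty.mp hh.symm

lemma empty_emptyset (U : UpdFamily) (h3 : P3 U) {W : Type} [MeasurableSpace W]
    {X : Set (ProbabilityMeasure W)} {B : Set W} (hB : MeasurableSet B)
    (h : U W X B = ∅) : U W (∅ : Set (ProbabilityMeasure W)) B = ∅ := by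
  have hh := h3 W X B B hB hB
  rw [h, Set.inter_self] at hh
  rw [hh, h]

lemma empty_inter (U : UpdFamily) (h3 : P3 U) {W : Type} [MeasurableSpace W]
    {X : Set (ProbabilityMeasure W)} {B C : Set W} (hB : MeasurableSet B)
    (hC : MeasurableSet C) (hXB : U W X B = ∅)
    (hC0 : U W (∅ : Set (ProbabilityMeasure W)) C = ∅) : U W X (B ∩ C) = ∅ := by
  have hh := h3 W X B C hB hC
  rw [hXB, hC0] at hh
  exact hh.symm

lemma bool_pm_ext {μ ν : ProbabilityMeasure Bool}
    (h : μ.toMeasure {true} = ν.toMeasure {true}) : μ = ν := by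
  apply ProbabilityMeasure.toMeasure_injective
  rw [MeasureTheory.Measure.ext_iff_singleton]
  intro a
  cases a
  · have h1 : ({false} : Set Bool) = {true}ᶜ := by
      ext x; cases x <;> simp
    rw [h1, measure_compl (MeasurableSet.of_discrete) (measure_ne_top _ _),
        measure_compl (MeasurableSet.of_discrete) (measure_ne_top _ _), h]
    simp only [measure_univ]
  · exact h

lemma punit_pm_ext (μ ν : ProbabilityMeasure PUnit) : μ = ν := by
  apply ProbabilityMeasure.toMeasure_injective
  rw [MeasureTheory.Measure.ext_iff_singleton]
  intro a
  have h1 : ({a} : Set PUnit) = Set.univ := by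
    ext x; simp [Subsingleton.elim x a]
  rw [h1]
  simp

/-- Key transfer lemma: emptiness of the update transfers between singleton inputs whose
events are nonempty, proper, and of equal measure. -/
lemma key (U : UpdFamily) (h2 : P2 U) {W : Type} [MeasurableSpace W]
    (Pr : ProbabilityMeasure W) (B : Set W) (hB : MeasurableSet B)
    (hBne : B.Nonempty) (hBcne : Bᶜ.Nonempty)
    (hempty : U W {Pr} B = ∅)
    {W2 : Type} [MeasurableSpace W2] (μ : ProbabilityMeasure W2) (D : Set W2)
    (hD : MeasurableSet D) (hDne : D.Nonempty) (hDcne : Dᶜ.Nonempty)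
    (hval : μ.toMeasure D = Pr.toMeasure B) :
    U W2 {μ} D = ∅ := by
  classical
  set f : W → Bool := fun w => decide (w ∈ B) with hfdef
  set g : W2 → Bool := fun w => decide (w ∈ D) with hgdef
  have hfpre : f ⁻¹' {true} = B := by
    ext w; simp [hfdef]
  have hgpre : g ⁻¹' {true} = D := by
    ext w; simp [hgdef]
  have hfprefalse : f ⁻¹' {false} = Bᶜ := by
    ext w; simp [hfdef]
  have hgprefalse : g ⁻¹' {false} = Dᶜ := by
    ext w; simp [hgdef]
  have hf : Measurable f := by
    apply measurable_to_countable'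
    intro y
    cases y
    · rw [hfprefalse]; exact hB.compl
    · rw [hfpre]; exact hB
  have hg : Measurable g := by
    apply measurable_to_countable'
    intro y
    cases y
    · rw [hgprefalse]; exact hD.compl
    · rw [hgpre]; exact hD
  have hfsurj : Function.Surjective f := by
    intro b
    cases b
    · obtain ⟨x, hx⟩ := hBcne
      refine ⟨x, ?_⟩
      simp only [hfdef]
      rw [decide_eq_false_iff_not]
      exact hx
    · obtain ⟨x, hx⟩ := hBne
      exact ⟨x, by simp [hfdef, hx]⟩
  have hgsurj : Function.Surjective g := by
    intro b
    cases b
    · obtain ⟨x, hx⟩ := hDcne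
      refine ⟨x, ?_⟩
      simp only [hgdef]
      rw [decide_eq_false_iff_not]
      exact hx
    · obtain ⟨x, hx⟩ := hDne
      exact ⟨x, by simp [hgdef, hx]⟩
  have hBool : U Bool {pushPM hf Pr} {true} = ∅ := by
    apply empty_down U h2 hf hfsurj Pr MeasurableSet.of_discrete
    rw [hfpre]; exact hempty
  have hpush : pushPM hg μ = pushPM hf Pr := by
    apply bool_pm_ext
    rw [pushPM_apply hg μ MeasurableSet.of_discrete,
        pushPM_apply hf Pr MeasurableSet.of_discrete, hgpre, hfpre, hval]
  have hfin := empty_up U h2 hg hgsurj μ MeasurableSet.of_discrete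
    (by rw [hpush]; exact hBool)
  rw [hgpre] at hfin
  exact hfin

end

end Stmt8Aux

/-- under P2 and P3, emptiness of the update transfers to all events of
probability less than `α`. -/
theorem stmt8 (U : UpdFamily) (h2 : P2 U) (h3 : P3 U)
    (W : Type) [MeasurableSpace W] (Pr : ProbabilityMeasure W) (B : Set W)
    (hB : MeasurableSet B) (α : ℝ≥0) (hα : Pr B = α) (hα1 : α < 1)
    (hempty : U W {Pr} B = ∅) :
    ∀ (W' : Type) [MeasurableSpace W'] (Pr' : ProbabilityMeasure W') (B' : Set W'),
      MeasurableSet B' → Pr' B' < α → U W' {Pr'} B' = ∅ := by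
  intro W' _ Pr' B' hB' hβlt
  classical
  set β : ℝ≥0 := Pr' B' with hβdef
  have htB : Pr.toMeasure B = (α : ℝ≥0∞) := by
    rw [← ProbabilityMeasure.ennreal_coeFn_eq_coeFn_toMeasure, hα]
  have htB' : Pr'.toMeasure B' = (β : ℝ≥0∞) := by
    rw [← ProbabilityMeasure.ennreal_coeFn_eq_coeFn_toMeasure]
  have hβα : (β : ℝ≥0∞) ≤ (α : ℝ≥0∞) := by exact_mod_cast hβlt.le
  have hA1 : (α : ℝ≥0∞) ≤ 1 := by exact_mod_cast hα1.le
  have hα0 : 0 < α := lt_of_le_of_lt (zero_le (a := β)) hβlt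
  have hBne : B.Nonempty := by
    rw [Set.nonempty_iff_ne_empty]
    intro hBe
    have hz : (α : ℝ≥0∞) = 0 := by rw [← htB, hBe]; simp
    rw [ENNReal.coe_eq_zero] at hz
    exact hα0.ne' hz
  have hBcne : Bᶜ.Nonempty := by
    rw [Set.nonempty_iff_ne_empty]
    intro hc
    have hBu : B = Set.univ := by rwa [Set.compl_empty_iff] at hc
    have h1 : (α : ℝ≥0∞) = 1 := by rw [← htB, hBu]; exact measure_univ
    rw [ENNReal.coe_eq_one] at h1
    exact hα1.ne h1
  -- the three-point measure Pr'' with Pr''{1,2} = α, Pr''{2} = β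
  set PrM : Measure (Fin 3) :=
    (1 - (α : ℝ≥0∞)) • Measure.dirac 0 +
      (((α : ℝ≥0∞) - (β : ℝ≥0∞)) • Measure.dirac 1 + (β : ℝ≥0∞) • Measure.dirac 2) with hPrMdef
  have hPrMuniv : PrM Set.univ = 1 := by
    simp only [hPrMdef, Measure.add_apply, Measure.smul_apply, smul_eq_mul, measure_univ, mul_one]
    rw [tsub_add_cancel_of_le hβα, tsub_add_cancel_of_le hA1]
  set PM3 : ProbabilityMeasure (Fin 3) := ⟨PrM, ⟨hPrMuniv⟩⟩ with hPM3def
  -- the auxiliary measure Q with Q{0,2} = Q{0} = α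
  set QM : Measure (Fin 3) :=
    (α : ℝ≥0∞) • Measure.dirac 0 + (1 - (α : ℝ≥0∞)) • Measure.dirac 1 with hQMdef
  have hQMuniv : QM Set.univ = 1 := by
    simp only [hQMdef, Measure.add_apply, Measure.smul_apply, smul_eq_mul, measure_univ, mul_one]
    rw [add_tsub_cancel_of_le hA1]
  set Q3 : ProbabilityMeasure (Fin 3) := ⟨QM, ⟨hQMuniv⟩⟩ with hQ3def
  -- value computations
  have hmem12 : ∀ x : Fin 3, x ∈ ({1, 2} : Set (Fin 3)) ↔ (x = 1 ∨ x = 2) := by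
    intro x; simp [Set.mem_insert_iff]
  have hPM12 : PM3.toMeasure ({1, 2} : Set (Fin 3)) = (α : ℝ≥0∞) := by
    show PrM _ = _
    simp only [hPrMdef, Measure.add_apply, Measure.smul_apply, smul_eq_mul, Measure.dirac_apply]
    rw [Set.indicator_of_notMem (by rw [hmem12]; decide),
      Set.indicator_of_mem (by rw [hmem12]; decide),
      Set.indicator_of_mem (by rw [hmem12]; decide)]
    simp only [Pi.one_apply, mul_one, mul_zero, zero_add]
    exact tsub_add_cancel_of_le hβα
  have hPM2 : PM3.toMeasure ({2} : Set (Fin 3)) = (β : ℝ≥0∞) := by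
    show PrM _ = _
    simp only [hPrMdef, Measure.add_apply, Measure.smul_apply, smul_eq_mul, Measure.dirac_apply]
    rw [Set.indicator_of_notMem (by decide), Set.indicator_of_notMem (by decide),
      Set.indicator_of_mem (by decide)]
    simp
  have hmem02 : ∀ x : Fin 3, x ∈ ({0, 2} : Set (Fin 3)) ↔ (x = 0 ∨ x = 2) := by
    intro x; simp [Set.mem_insert_iff]
  have hQ02 : Q3.toMeasure ({0, 2} : Set (Fin 3)) = (α : ℝ≥0∞) := by
    show QM _ = _
    simp only [hQMdef, Measure.add_apply, Measure.smul_apply, smul_eq_mul, Measure.dirac_apply]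
    rw [Set.indicator_of_mem (by rw [hmem02]; decide),
      Set.indicator_of_notMem (by rw [hmem02]; decide)]
    simp
  have hQ0 : Q3.toMeasure ({0} : Set (Fin 3)) = (α : ℝ≥0∞) := by
    show QM _ = _
    simp only [hQMdef, Measure.add_apply, Measure.smul_apply, smul_eq_mul, Measure.dirac_apply]
    rw [Set.indicator_of_mem (by decide), Set.indicator_of_notMem (by decide)]
    simp
  -- emptiness on the three-point space
  have hM12 : U (Fin 3) {PM3} ({1, 2} : Set (Fin 3)) = ∅ :=
    key U h2 Pr B hB hBne hBcne hempty PM3 _ MeasurableSet.of_discrete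
      ⟨1, by rw [hmem12]; decide⟩ ⟨0, by intro h; rw [hmem12] at h; revert h; decide⟩
      (hPM12.trans htB.symm)
  have hQ02e : U (Fin 3) {Q3} ({0, 2} : Set (Fin 3)) = ∅ :=
    key U h2 Pr B hB hBne hBcne hempty Q3 _ MeasurableSet.of_discrete
      ⟨0, by rw [hmem02]; decide⟩ ⟨1, by intro h; rw [hmem02] at h; revert h; decide⟩
      (hQ02.trans htB.symm)
  have hQ0e : U (Fin 3) {Q3} ({0} : Set (Fin 3)) = ∅ :=
    key U h2 Pr B hB hBne hBcne hempty Q3 _ MeasurableSet.of_discrete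
      ⟨0, rfl⟩ ⟨1, by decide⟩ (hQ0.trans htB.symm)
  have hE02 : U (Fin 3) ∅ ({0, 2} : Set (Fin 3)) = ∅ :=
    empty_emptyset U h3 MeasurableSet.of_discrete hQ02e
  have hE0 : U (Fin 3) ∅ ({0} : Set (Fin 3)) = ∅ :=
    empty_emptyset U h3 MeasurableSet.of_discrete hQ0e
  have hint : ({1, 2} : Set (Fin 3)) ∩ {0, 2} = {2} := by
    ext x
    simp only [Set.mem_inter_iff, hmem12, hmem02, Set.mem_singleton_iff]
    revert x; decide
  have hM2 : U (Fin 3) {PM3} ({2} : Set (Fin 3)) = ∅ := by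
    have h := empty_inter U h3 MeasurableSet.of_discrete MeasurableSet.of_discrete
      hM12 hE02
    rwa [hint] at h
  rcases B'.eq_empty_or_nonempty with hBe | hBne'
  · -- B' = ∅ : go through PUnit
    have hint2 : ({2} : Set (Fin 3)) ∩ {0} = ∅ := by
      ext x
      simp only [Set.mem_inter_iff, Set.mem_singleton_iff, Set.mem_empty_iff_false, iff_false,
        not_and]
      revert x; decide
    have hM0 : U (Fin 3) {PM3} (∅ : Set (Fin 3)) = ∅ := by
      have h := empty_inter U h3 MeasurableSet.of_discrete MeasurableSet.of_discrete
        hM2 hE0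
      rwa [hint2] at h
    have hWne : Nonempty W' := by
      by_contra hne
      have hu : (Set.univ : Set W') = ∅ := Set.univ_eq_empty_iff.mpr (not_nonempty_iff.mp hne)
      have h1 : Pr'.toMeasure Set.univ = 1 := measure_univ
      rw [hu] at h1
      simp at h1
    set f : W' → PUnit := fun _ => PUnit.unit with hfdef
    have hfm : Measurable f := measurable_const
    have hfs : Function.Surjective f := fun u => ⟨Classical.choice hWne, Subsingleton.elim _ _⟩
    set g : Fin 3 → PUnit := fun _ => PUnit.unit with hgdef
    have hgm : Measurable g := measurable_const
    have hgs : Function.Surjective g := fun u => ⟨0, Subsingleton.elim _ _⟩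
    have hPU : U PUnit {pushPM hgm PM3} (∅ : Set PUnit) = ∅ := by
      apply empty_down U h2 hgm hgs PM3 MeasurableSet.of_discrete
      rw [Set.preimage_empty]
      exact hM0
    have hpu2 : pushPM hfm Pr' = pushPM hgm PM3 := punit_pm_ext _ _
    have hfin := empty_up U h2 hfm hfs Pr' MeasurableSet.of_discrete
      (by rw [hpu2]; exact hPU)
    rw [Set.preimage_empty] at hfin
    rw [hBe]
    exact hfin
  · -- B' nonempty
    have hBcne' : B'ᶜ.Nonempty := by
      rw [Set.nonempty_iff_ne_empty]
      intro hc
      have hBu : B' = Set.univ := by rwa [Set.compl_empty_iff] at hc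
      have h1 : (β : ℝ≥0∞) = 1 := by rw [← htB', hBu]; exact measure_univ
      rw [ENNReal.coe_eq_one] at h1
      rw [h1] at hβlt
      exact absurd hβlt (not_lt.mpr hα1.le)
    exact key U h2 PM3 ({2} : Set (Fin 3)) MeasurableSet.of_discrete ⟨2, rfl⟩
      ⟨0, by decide⟩ hM2 Pr' B' hB' hBne' hBcne' (htB'.trans hPM2.symm)
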